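/- Let G be a finite p-group and N a normal subgroup of G with [G,N] ⊆ N^p. Then γ_i^G(N) ⊆ D_i(N) for every i ≥ 2, where γ_2^G(N) = [G,N] and γ_{i+1}^G(N) = [γ_i^G(N), N], and D_i(N) is the i-th term of the Jennings series of N. -/

import Mathlib

/-- The Jennings (Brauer–Jennings–Zassenhaus) series of a group:
`D_n(G) = ∏_{i p^j ≥ n} γ_i(G)^{p^j}` (here `γ_{i+1}(G) = lowerCentralSeries G i`). -/
def jennings (p : ℕ) (G : Type*) [Group G] (n : ℕ) : Subgroup G :=
  ⨆ (i : ℕ) (j : ℕ) (_ : n ≤ (i + 1) * p ^ j),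
    Subgroup.closure {x : G | ∃ y ∈ (⊤ : Subgroup G).lowerCentralSeries i, x = y ^ p ^ j}

/-- The relative lower central series: `γ_1^G(N) = G`, `γ_{n+1}^G(N) = [γ_n^G(N), N]`.
Here `gammaRel N i` is `γ_{i+1}^G(N)`. -/
def gammaRel {G : Type*} [Group G] (N : Subgroup G) : ℕ → Subgroup G
  | 0 => ⊤
  | n + 1 => ⁅gammaRel N n, N⁆

section Helpers

open Subgroup

open scoped commutatorElement

variable {G : Type*} [Group G]

/-- A closure of a conjugation-invariant set is normal. -/
theorem closure_normal_of_conj {S : Set G} (hS : ∀ (g : G), ∀ s ∈ S, g * s * g⁻¹ ∈ S) :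
    (Subgroup.closure S).Normal := by
  refine ⟨fun x hx g => ?_⟩
  induction hx using closure_induction with
  | mem s hs => exact subset_closure (hS g s hs)
  | one => simpa using one_mem _
  | mul x y hx hy px py =>
    have : g * (x * y) * g⁻¹ = (g * x * g⁻¹) * (g * y * g⁻¹) := by group
    rw [this]; exact mul_mem px py
  | inv x hx px =>
    have : g * x⁻¹ * g⁻¹ = (g * x * g⁻¹)⁻¹ := by group
    rw [this]; exact inv_mem px

/-- To bound `⁅closure S, K⁆` by a normal subgroup, it suffices to check generators. -/
theorem commutator_closure_le {S : Set G} {K C : Subgroup G} [hC : C.Normal]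
    (h : ∀ s ∈ S, ∀ k ∈ K, ⁅s, k⁆ ∈ C) : ⁅Subgroup.closure S, K⁆ ≤ C := by
  rw [Subgroup.commutator_le]
  have key : Subgroup.closure S ≤
      Subgroup.comap (QuotientGroup.mk' C)
        (Subgroup.centralizer ((QuotientGroup.mk' C) '' (K : Set G))) := by
    rw [Subgroup.closure_le]
    intro s hs
    simp only [SetLike.mem_coe, Subgroup.mem_comap]
    rw [Subgroup.mem_centralizer_iff]
    rintro _ ⟨k, hk, rfl⟩
    have h1 : (QuotientGroup.mk' C) ⁅s, k⁆ = 1 := (QuotientGroup.eq_one_iff _).mpr (h s hs k hk)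
    rw [map_commutatorElement] at h1
    exact (commutatorElement_eq_one_iff_commute.mp h1).symm.eq
  intro g hg k hk
  have hmem := key hg
  rw [Subgroup.mem_comap, Subgroup.mem_centralizer_iff] at hmem
  have h2 := hmem _ ⟨k, hk, rfl⟩
  have h3 : (QuotientGroup.mk' C) ⁅g, k⁆ = 1 := by
    rw [map_commutatorElement]
    exact commutatorElement_eq_one_iff_commute.mpr h2.symm
  exact (QuotientGroup.eq_one_iff _).mp h3

/-- If `⁅a,b⁆` commutes with `a`, then `⁅a^m, b⁆ = ⁅a,b⁆^m`. -/
theorem commutator_pow_left_of_commute {H : Type*} [Group H] (a b : H)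
    (hc : Commute ⁅a, b⁆ a) : ∀ m : ℕ, ⁅a ^ m, b⁆ = ⁅a, b⁆ ^ m := by
  intro m
  induction m with
  | zero => simp [commutatorElement_def]
  | succ m ih =>
    have key : ⁅a ^ (m + 1), b⁆ = a * ⁅a ^ m, b⁆ * a⁻¹ * ⁅a, b⁆ := by
      simp only [commutatorElement_def, pow_succ']
      group
    rw [key, ih]
    have hcomm : a * ⁅a, b⁆ ^ m = (⁅a, b⁆ ^ m) * a := (hc.pow_left m).eq.symm
    calc a * ⁅a, b⁆ ^ m * a⁻¹ * ⁅a, b⁆ = ⁅a, b⁆ ^ m * a * a⁻¹ * ⁅a, b⁆ := by rw [hcomm]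
      _ = ⁅a, b⁆ ^ (m + 1) := by rw [pow_succ]; group

/-- `Λ k` is the `(k+1)`-st term of the lower central series of `N`, viewed in `G`. -/
def lamS (N : Subgroup G) : ℕ → Subgroup G
  | 0 => N
  | k + 1 => ⁅lamS N k, N⁆

/-- `pPowS p N k` is the subgroup generated by `p`-th powers of `lamS N k`. -/
def pPowS (p : ℕ) (N : Subgroup G) (k : ℕ) : Subgroup G :=
  Subgroup.closure {x : G | ∃ y ∈ lamS N k, x = y ^ p}

theorem lamS_normal (N : Subgroup G) [hN : N.Normal] : ∀ k, (lamS N k).Normal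
  | 0 => hN
  | k + 1 => by
    haveI := lamS_normal N k
    exact Subgroup.commutator_normal _ _

theorem lamS_le (N : Subgroup G) [hN : N.Normal] : ∀ k, lamS N k ≤ N
  | 0 => le_rfl
  | k + 1 => Subgroup.commutator_le_right _ _

theorem pPowS_normal (p : ℕ) (N : Subgroup G) [hN : N.Normal] (k : ℕ) :
    (pPowS p N k).Normal := by
  apply closure_normal_of_conj
  rintro g _ ⟨y, hy, rfl⟩
  refine ⟨g * y * g⁻¹, (lamS_normal N k).conj_mem y hy g, ?_⟩
  have : g * y * g⁻¹ = (MulAut.conj g) y := rfl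
  rw [this, ← map_pow]
  rfl

theorem lamS_eq_map (N : Subgroup G) :
    ∀ k, ((⊤ : Subgroup ↥N).lowerCentralSeries k).map N.subtype = lamS N k
  | 0 => by
    have : ((⊤ : Subgroup ↥N).lowerCentralSeries 0) = ⊤ := rfl
    rw [this, ← MonoidHom.range_eq_map, Subgroup.range_subtype]
    rfl
  | k + 1 => by
    have h1 : (⊤ : Subgroup ↥N).lowerCentralSeries (k + 1) = ⁅(⊤ : Subgroup ↥N).lowerCentralSeries k, ⊤⁆ := rfl
    rw [h1, Subgroup.map_commutator, lamS_eq_map N k, ← MonoidHom.range_eq_map,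
      Subgroup.range_subtype]
    rfl

/-- The key induction: `γ_{k+2}^G(N) ≤ ⟨(γ_{k+1}(N))^p⟩ ⊔ γ_{k+2}(N)`. -/
theorem gammaRel_le_aux (p : ℕ) (N : Subgroup G) [hN : N.Normal]
    (h : ⁅(⊤ : Subgroup G), N⁆ ≤ Subgroup.closure {x : G | ∃ y ∈ N, x = y ^ p}) :
    ∀ k : ℕ, gammaRel N (k + 1) ≤ pPowS p N k ⊔ lamS N (k + 1) := by
  intro k
  induction k with
  | zero =>
    exact le_trans h le_sup_left
  | succ k ih =>
    haveI hn2 : (lamS N (k + 2)).Normal := lamS_normal N (k + 2)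
    haveI hp1 : (pPowS p N (k + 1)).Normal := pPowS_normal p N (k + 1)
    haveI hC : (pPowS p N (k + 1) ⊔ lamS N (k + 2)).Normal := Subgroup.sup_normal _ _
    have step : ⁅pPowS p N k ⊔ lamS N (k + 1), N⁆ ≤ pPowS p N (k + 1) ⊔ lamS N (k + 2) := by
      have hset : pPowS p N k ⊔ lamS N (k + 1) =
          Subgroup.closure ({x : G | ∃ y ∈ lamS N k, x = y ^ p} ∪ (lamS N (k + 1) : Set G)) := by
        rw [Subgroup.closure_union, Subgroup.closure_eq]
        rfl
      rw [hset]
      apply commutator_closure_le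
      rintro s hs n hn
      rcases hs with ⟨z, hz, rfl⟩ | hs
      · -- s = z^p with z ∈ lamS N k
        have hc : ⁅z, n⁆ ∈ lamS N (k + 1) := Subgroup.commutator_mem_commutator hz hn
        have hcz : ⁅⁅z, n⁆, z⁆ ∈ lamS N (k + 2) :=
          Subgroup.commutator_mem_commutator hc (lamS_le N k hz)
        set φ := QuotientGroup.mk' (lamS N (k + 2)) with hφ
        have hcomm : Commute ⁅φ z, φ n⁆ (φ z) := by
          apply commutatorElement_eq_one_iff_commute.mp
          rw [← map_commutatorElement, ← map_commutatorElement]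
          exact (QuotientGroup.eq_one_iff _).mpr hcz
        have hpow : φ ⁅z ^ p, n⁆ = φ (⁅z, n⁆ ^ p) := by
          rw [map_commutatorElement, map_pow,
            commutator_pow_left_of_commute _ _ hcomm p, ← map_commutatorElement, ← map_pow]
        have hdiff : (⁅z, n⁆ ^ p)⁻¹ * ⁅z ^ p, n⁆ ∈ lamS N (k + 2) := by
          apply (QuotientGroup.eq_one_iff _).mp
          have : φ ((⁅z, n⁆ ^ p)⁻¹ * ⁅z ^ p, n⁆) = 1 := by
            rw [map_mul, map_inv, hpow]
            group
          exact this
        have hrw : ⁅z ^ p, n⁆ = ⁅z, n⁆ ^ p * ((⁅z, n⁆ ^ p)⁻¹ * ⁅z ^ p, n⁆) := by group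
        rw [hrw]
        apply mul_mem
        · exact Subgroup.mem_sup_left (Subgroup.subset_closure ⟨⁅z, n⁆, hc, rfl⟩)
        · exact Subgroup.mem_sup_right hdiff
      · -- s ∈ lamS N (k+1)
        exact Subgroup.mem_sup_right (Subgroup.commutator_mem_commutator hs hn)
    calc gammaRel N (k + 2) = ⁅gammaRel N (k + 1), N⁆ := rfl
      _ ≤ ⁅pPowS p N k ⊔ lamS N (k + 1), N⁆ := Subgroup.commutator_mono ih le_rfl
      _ ≤ _ := step

theorem piece_le_jennings {H : Type*} [Group H] (p n i j : ℕ) (hc : n ≤ (i + 1) * p ^ j) :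
    Subgroup.closure {x : H | ∃ y ∈ (⊤ : Subgroup H).lowerCentralSeries i, x = y ^ p ^ j} ≤ jennings p H n :=
  le_iSup_of_le i (le_iSup_of_le j (le_iSup_of_le hc le_rfl))

end Helpers

/-- Let `G` be a finite `p`-group and `N ⊴ G` with `[G,N] ⊆ N^p`. Then
`γ_i^G(N) ⊆ D_i(N)` for every `i ≥ 2`. -/
theorem gammaRel_le_jennings (p : ℕ) (hp : p.Prime)
    (G : Type*) [Group G] [Finite G] (hG : ∃ s : ℕ, Nat.card G = p ^ s)
    (N : Subgroup G) [N.Normal]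
    (h : ⁅(⊤ : Subgroup G), N⁆ ≤ Subgroup.closure {x : G | ∃ y ∈ N, x = y ^ p}) :
    ∀ i : ℕ, 2 ≤ i → gammaRel N (i - 1) ≤ (jennings p ↥N i).map N.subtype := by
  intro i hi
  obtain ⟨k, rfl⟩ : ∃ k, i = k + 2 := ⟨i - 2, by omega⟩
  have hidx : k + 2 - 1 = k + 1 := rfl
  rw [hidx]
  refine le_trans (gammaRel_le_aux p N h k) (sup_le ?_ ?_)
  · -- pPowS p N k ≤ map of jennings
    rw [pPowS, Subgroup.closure_le]
    rintro _ ⟨y, hy, rfl⟩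
    rw [← lamS_eq_map] at hy
    obtain ⟨y', hy', rfl⟩ := hy
    have hcond : k + 2 ≤ (k + 1) * p ^ 1 := by
      have h2 := hp.two_le
      calc k + 2 ≤ (k + 1) * 2 := by omega
        _ ≤ (k + 1) * p := Nat.mul_le_mul_left _ h2
        _ = (k + 1) * p ^ 1 := by rw [pow_one]
    have hmem : y' ^ p ∈ jennings p ↥N (k + 2) :=
      piece_le_jennings p (k + 2) k 1 hcond
        (Subgroup.subset_closure ⟨y', hy', by rw [pow_one]⟩)
    exact ⟨y' ^ p, hmem, by rw [map_pow]⟩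
  · -- lamS N (k+1) ≤ map of jennings
    rw [← lamS_eq_map]
    apply Subgroup.map_mono
    refine le_trans ?_ (piece_le_jennings p (k + 2) (k + 1) 0 (by simp))
    intro x hx
    exact Subgroup.subset_closure ⟨x, hx, by simp⟩
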